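/- Let λ₁ and λ₂ be nonzero integers with |λ₁| ≠ |λ₂|. There exists a constant C > 0 such that for every prime p > max(|λ₁|, |λ₂|) there exists a set A ⊆ ℤ/pℤ with |A| ≥ p/2 − C·p/log p such that 0 ∉ λ₁·A + λ₂·A, i.e. there are no x, y ∈ A with λ₁·x + λ₂·y = 0 in ℤ/pℤ. -/

import Mathlib

private lemma count_even_lemma (d : ℕ) :
    ((Finset.univ : Finset (Fin d)).filter
      (fun i : Fin d => Even (i : ℕ) ∧ (i : ℕ) + 1 < d)).card = d / 2 := by
  classical
  rw [← Finset.card_range (d / 2)]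
  apply Finset.card_bij (fun (i : Fin d) _ => (i : ℕ) / 2)
  · intro i hi
    simp only [Finset.mem_filter, Finset.mem_univ, true_and, Nat.even_iff] at hi
    simp only [Finset.mem_range]
    omega
  · intro a ha b hb hab
    simp only [Finset.mem_filter, Finset.mem_univ, true_and, Nat.even_iff] at ha hb
    exact Fin.ext (by omega)
  · intro j hj
    simp only [Finset.mem_range] at hj
    refine ⟨⟨2*j, by omega⟩, ?_, by simp only [Fin.val_mk]; omega⟩
    simp only [Finset.mem_filter, Finset.mem_univ, true_and, Nat.even_iff]
    omega

private lemma log_le_half (x : ℝ) (hx : 2 ≤ x) : Real.log x ≤ x / 2 := by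
  have h0 : (0:ℝ) < x := by linarith
  have hs : Real.sqrt x ^ 2 = x := Real.sq_sqrt h0.le
  have h1 : Real.log x = 2 * Real.log (Real.sqrt x) := by
    rw [← hs, Real.log_pow]; push_cast; rw [hs]
  have h2 : Real.log (Real.sqrt x) ≤ Real.sqrt x - 1 :=
    Real.log_le_sub_one_of_pos (Real.sqrt_pos.2 h0)
  nlinarith [sq_nonneg (Real.sqrt x - 2)]

private lemma card_bound (C P L Q D R : ℝ) (hC : 1/2 < C) (hP : 2 ≤ P) (hL : 0 < L)
    (hLhalf : L ≤ P/2) (hlog : L ≤ D*C) (hQD : Q*D = P - 1) (hQ0 : 0 ≤ Q)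
    (hR : D - 1 ≤ 2*R) : P/2 - C*P/L ≤ Q*R := by
  have hQL : Q*L ≤ C*P := by nlinarith [mul_le_mul_of_nonneg_left hlog hQ0]
  have h1 : L ≤ C*P := by nlinarith
  have hQR : P - 1 - Q ≤ 2*(Q*R) := by nlinarith [mul_le_mul_of_nonneg_left hR hQ0]
  have hD : Q ≤ C*P/L := (le_div_iff₀ hL).2 hQL
  have h1' : 1 ≤ C*P/L := (one_le_div hL).2 h1
  linarith

theorem large_set_avoiding_zero (l₁ l₂ : ℤ) (h₁ : l₁ ≠ 0) (h₂ : l₂ ≠ 0)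
    (habs : |l₁| ≠ |l₂|) :
    ∃ C : ℝ, 0 < C ∧ ∀ p : ℕ, p.Prime → max |l₁| |l₂| < (p : ℤ) →
      ∃ A : Finset (ZMod p),
        (p : ℝ) / 2 - C * p / Real.log p ≤ (A.card : ℝ) ∧
        ∀ x ∈ A, ∀ y ∈ A, (l₁ : ZMod p) * x + (l₂ : ZMod p) * y ≠ 0 := by
  classical
  set Mz : ℤ := max |l₁| |l₂| with hMzdef
  have hMz1 : 1 ≤ Mz := le_trans (Int.one_le_abs h₁) (le_max_left _ _)
  set C : ℝ := Real.log (2 * (Mz : ℝ)) with hCdef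
  have hMzR : (1:ℝ) ≤ (Mz:ℝ) := by exact_mod_cast hMz1
  have hC2 : Real.log 2 ≤ C := Real.log_le_log (by norm_num) (by nlinarith)
  have hChalf : (1:ℝ)/2 < C :=
    lt_of_lt_of_le (by linarith [Real.log_two_gt_d9]) hC2
  have hC0 : 0 < C := lt_trans (by norm_num) hChalf
  refine ⟨C, hC0, ?_⟩
  intro p hp hlt
  haveI : Fact p.Prime := ⟨hp⟩
  have hp2 : 2 ≤ p := hp.two_le
  have hpR2 : (2:ℝ) ≤ (p:ℝ) := by exact_mod_cast hp2
  have hlogp : 0 < Real.log p := Real.log_pos (by linarith)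
  -- l₁, l₂ are nonzero mod p
  have hl1p : (l₁ : ZMod p) ≠ 0 := by
    intro h
    have hd : (p:ℤ) ∣ l₁ := (ZMod.intCast_zmod_eq_zero_iff_dvd l₁ p).1 h
    have h3 : (p:ℤ) ≤ |l₁| := Int.le_of_dvd (abs_pos.2 h₁) ((dvd_abs _ _).2 hd)
    have h4 : |l₁| ≤ Mz := le_max_left _ _
    omega
  have hl2p : (l₂ : ZMod p) ≠ 0 := by
    intro h
    have hd : (p:ℤ) ∣ l₂ := (ZMod.intCast_zmod_eq_zero_iff_dvd l₂ p).1 h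
    have h3 : (p:ℤ) ≤ |l₂| := Int.le_of_dvd (abs_pos.2 h₂) ((dvd_abs _ _).2 hd)
    have h4 : |l₂| ≤ Mz := le_max_right _ _
    omega
  -- the ratio μ0 = -l₂/l₁ and the corresponding unit u
  set μ0 : ZMod p := -((l₂ : ZMod p) / (l₁ : ZMod p)) with hμ0def
  have hμ0 : μ0 ≠ 0 := by
    rw [hμ0def, neg_ne_zero]
    exact div_ne_zero hl2p hl1p
  set u : (ZMod p)ˣ := Units.mk0 μ0 hμ0 with hudef
  set d : ℕ := orderOf u with hddef
  have hd0 : 0 < d := orderOf_pos u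
  -- p divides (-l₂)^d - l₁^d, which is nonzero, hence log p ≤ d * C
  have hμd : μ0 ^ d = 1 := by
    have h5 := pow_orderOf_eq_one u
    calc μ0 ^ d = ((u ^ d : (ZMod p)ˣ) : ZMod p) := by
          rw [Units.val_pow_eq_pow_val, hudef, Units.val_mk0]
      _ = 1 := by rw [h5]; rfl
  have hml : μ0 * (l₁ : ZMod p) = -(l₂ : ZMod p) := by
    rw [hμ0def]; field_simp
  have hpow : (-(l₂:ZMod p)) ^ d = (l₁ : ZMod p) ^ d := by
    calc (-(l₂:ZMod p))^d = (μ0 * (l₁:ZMod p))^d := by rw [hml]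
      _ = μ0^d * (l₁:ZMod p)^d := mul_pow _ _ _
      _ = (l₁:ZMod p) ^ d := by rw [hμd, one_mul]
  have hdvd : (p:ℤ) ∣ ((-l₂)^d - l₁^d) := by
    apply (ZMod.intCast_zmod_eq_zero_iff_dvd _ p).1
    push_cast
    rw [hpow]
    ring
  have hne : ((-l₂)^d - l₁^d : ℤ) ≠ 0 := by
    intro h
    have habs2 : |l₂| ^ d = |l₁| ^ d := by
      rw [← abs_neg l₂, ← abs_pow, ← abs_pow, sub_eq_zero.1 h]
    rcases (lt_or_gt_of_ne habs) with hc | hc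
    · have h5 := pow_lt_pow_left₀ hc (abs_nonneg l₁) hd0.ne'
      linarith
    · have h5 := pow_lt_pow_left₀ hc (abs_nonneg l₂) hd0.ne'
      linarith
  have hple : (p:ℤ) ≤ (2*Mz)^d := by
    have h6 : (p:ℤ) ≤ |(-l₂)^d - l₁^d| :=
      Int.le_of_dvd (abs_pos.2 hne) ((dvd_abs _ _).2 hdvd)
    have h7 : |(-l₂)^d - l₁^d| ≤ |l₂|^d + |l₁|^d := by
      calc |(-l₂)^d - l₁^d| ≤ |(-l₂)^d| + |l₁^d| := abs_sub _ _
        _ = |l₂|^d + |l₁|^d := by rw [abs_pow, abs_pow, abs_neg]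
    have h8a : |l₁|^d ≤ Mz^d := pow_le_pow_left₀ (abs_nonneg l₁) (le_max_left _ _) d
    have h8b : |l₂|^d ≤ Mz^d := pow_le_pow_left₀ (abs_nonneg l₂) (le_max_right _ _) d
    have h9 : 2 * Mz^d ≤ (2*Mz)^d := by
      rw [mul_pow]
      have h2d : (2:ℤ) ≤ 2^d := by
        calc (2:ℤ) = 2^1 := by ring
          _ ≤ 2^d := pow_le_pow_right₀ (by norm_num) hd0
      have hMp : (0:ℤ) < Mz^d := pow_pos (by omega) d
      nlinarith
    linarith
  have hlog : Real.log p ≤ (d:ℝ) * C := by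
    have h10 : (p:ℝ) ≤ (2*(Mz:ℝ))^d := by exact_mod_cast hple
    calc Real.log p ≤ Real.log ((2*(Mz:ℝ))^d) :=
          Real.log_le_log (by positivity) h10
      _ = (d:ℝ) * C := by rw [Real.log_pow, hCdef]
  -- group-theoretic construction
  set H : Subgroup (ZMod p)ˣ := Subgroup.zpowers u with hHdef
  set q : ℕ := Nat.card ((ZMod p)ˣ ⧸ H) with hqdef
  have hqd : q * d = p - 1 := by
    have h10 : Nat.card (ZMod p)ˣ = q * Nat.card H :=
      Subgroup.card_eq_card_quotient_mul_card_subgroup H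
    rw [hHdef, Nat.card_zpowers] at h10
    rw [← hddef] at h10
    rw [← h10, Nat.card_eq_fintype_card, ZMod.card_units]
  set f : ((ZMod p)ˣ ⧸ H) × Fin d → (ZMod p)ˣ :=
    fun ci => ci.1.out * u ^ ((ci.2 : ℕ)) with hfdef
  have hfinj : Function.Injective f := by
    rintro ⟨c, i⟩ ⟨c', j⟩ h
    have h' : c.out * u ^ ((i:ℕ)) = c'.out * u ^ ((j:ℕ)) := h
    have hcc : c = c' := by
      rw [← QuotientGroup.out_eq' c, ← QuotientGroup.out_eq' c', QuotientGroup.eq]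
      have h2 : c.out⁻¹ * c'.out = u ^ ((i:ℕ)) * (u ^ ((j:ℕ)))⁻¹ := by
        calc c.out⁻¹ * c'.out
            = c.out⁻¹ * (c'.out * u ^ ((j:ℕ))) * (u ^ ((j:ℕ)))⁻¹ := by group
          _ = c.out⁻¹ * (c.out * u ^ ((i:ℕ))) * (u ^ ((j:ℕ)))⁻¹ := by rw [h']
          _ = u ^ ((i:ℕ)) * (u ^ ((j:ℕ)))⁻¹ := by group
      rw [h2, hHdef]
      exact Subgroup.mul_mem _ (Subgroup.pow_mem _ (Subgroup.mem_zpowers u) _)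
        (Subgroup.inv_mem _ (Subgroup.pow_mem _ (Subgroup.mem_zpowers u) _))
    subst hcc
    have hu : u ^ ((i:ℕ)) = u ^ ((j:ℕ)) := mul_left_cancel h'
    have hmod := pow_inj_mod.1 hu
    rw [← hddef, Nat.mod_eq_of_lt i.isLt, Nat.mod_eq_of_lt j.isLt] at hmod
    exact Prod.ext rfl (Fin.ext hmod)
  set S : Finset (Fin d) :=
    Finset.univ.filter (fun i : Fin d => Even (i:ℕ) ∧ (i:ℕ)+1 < d) with hSdef
  set A' : Finset (ZMod p)ˣ := (Finset.univ ×ˢ S).image f with hA'def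
  refine ⟨A'.image (Units.val), ?_, ?_⟩
  · -- cardinality bound
    have hcardA : (A'.image Units.val).card = q * (d/2) := by
      rw [Finset.card_image_of_injective _ Units.val_injective, hA'def,
        Finset.card_image_of_injective _ hfinj, Finset.card_product,
        Finset.card_univ, hSdef, count_even_lemma, hqdef, Nat.card_eq_fintype_card]
    rw [hcardA]
    have hQ0 : (0:ℝ) ≤ (q:ℝ) := Nat.cast_nonneg q
    have hqdR : (q:ℝ) * (d:ℝ) = (p:ℝ) - 1 := by
      have : ((q*d : ℕ) : ℝ) = ((p - 1 : ℕ) : ℝ) := by rw [hqd]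
      push_cast [Nat.cast_sub (by omega : 1 ≤ p)] at this
      linarith [this]
    have hR : (d:ℝ) - 1 ≤ 2 * ((d/2 : ℕ) : ℝ) := by
      have : d - 1 ≤ 2 * (d/2) := by omega
      have h12 : ((d - 1 : ℕ) : ℝ) ≤ ((2 * (d/2) : ℕ) : ℝ) := by exact_mod_cast this
      push_cast [Nat.cast_sub (by omega : 1 ≤ d)] at h12
      linarith
    have hcast : ((q * (d/2) : ℕ) : ℝ) = (q:ℝ) * ((d/2 : ℕ) : ℝ) := by push_cast; ring
    rw [hcast]
    have hR0 : (0:ℝ) ≤ ((d/2:ℕ):ℝ) := Nat.cast_nonneg _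
    exact card_bound C p (Real.log p) q d ((d/2:ℕ):ℝ) hChalf hpR2 hlogp
      (log_le_half p hpR2) (by linarith [hlog]) hqdR hQ0 hR
  · -- avoidance property
    rintro x hx y hy heq
    rw [Finset.mem_image] at hx hy
    obtain ⟨a, ha, rfl⟩ := hx
    obtain ⟨b, hb, rfl⟩ := hy
    have hab1 : (a : ZMod p) * (l₁ : ZMod p) = -((l₂:ZMod p) * (b : ZMod p)) := by
      linear_combination heq
    have hab2 : μ0 * (b:ZMod p) * (l₁:ZMod p) = -((l₂:ZMod p) * (b : ZMod p)) := by
      rw [hμ0def]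
      field_simp
    have hab : (a : ZMod p) = μ0 * (b:ZMod p) :=
      mul_right_cancel₀ hl1p (hab1.trans hab2.symm)
    have haub : a = u * b := by
      apply Units.ext
      rw [Units.val_mul, hudef, Units.val_mk0]
      exact hab
    rw [hA'def, Finset.mem_image] at ha hb
    obtain ⟨⟨c, i⟩, hci, hfa⟩ := ha
    obtain ⟨⟨c', j⟩, hcj, hfb⟩ := hb
    rw [Finset.mem_product, hSdef, Finset.mem_filter] at hci hcj
    have hieven : Even ((i:ℕ)) := hci.2.2.1
    have hjeven : Even ((j:ℕ)) := hcj.2.2.1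
    have hj1 : ((j:ℕ))+1 < d := hcj.2.2.2
    have hfa' : c.out * u ^ ((i:ℕ)) = a := hfa
    have hfb' : c'.out * u ^ ((j:ℕ)) = b := hfb
    have key : c.out * u ^ ((i:ℕ)) = c'.out * u ^ (((j:ℕ))+1) := by
      rw [hfa', haub, ← hfb', pow_succ]
      rw [mul_comm u (c'.out * u ^ ((j:ℕ))), mul_assoc]
    have hinj := hfinj (a₁ := (c, i)) (a₂ := (c', ⟨(j:ℕ)+1, hj1⟩)) key
    have hieq : (i:ℕ) = (j:ℕ)+1 := by
      have h14 := congrArg Prod.snd hinj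
      exact congrArg Fin.val h14
    rw [Nat.even_iff] at hieven hjeven
    omega
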